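/- arXiv:2009.06319 — 2 statements merged into one kernel-verified Lean document; each statement's English description precedes it below -/
import Mathlib

section
/- Let A be a symmetric positive-definite 3×3 real matrix, S := A⁻¹J(A−I), and m the associated symbol. Fix a₀ ∈ ℝ \ {0} and k₀ ∈ ℝ³ \ {0}, and set a(t) := a₀ exp(∫₀ᵗ m(e^{−rSᵀ}k₀) dr), k(t) := e^{−tSᵀ}k₀. Then the plane wave φ(x,t) := a(t) k(t) e^{2πi k(t)·x} (with values in ℂ³) satisfies, pointwise for all (x,t) ∈ ℝ³ × ℝ, the linearised semi-geostrophic equation ∂ₜφ(x,t) + (Sx·∇)φ(x,t) + Sᵀφ(x,t) = m(k(t)) φ(x,t), where the right-hand side is the action of the Fourier multiplier with symbol m on the plane wave with frequency k(t). -/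
open Matrix MeasureTheory Real

/-- The Coriolis-type matrix `J`. -/
noncomputable def Jmat : Matrix (Fin 3) (Fin 3) ℝ := !![0, -1, 0; 1, 0, 0; 0, 0, 0]

/-- The matrix `S := A⁻¹ J (A − I)`. -/
noncomputable def Smat (A : Matrix (Fin 3) (Fin 3) ℝ) : Matrix (Fin 3) (Fin 3) ℝ :=
  A⁻¹ * Jmat * (A - 1)

/-- The symbol `m(x) = 2 (x · A⁻¹Jx)/(x · A⁻¹x)`. -/
noncomputable def symb (A : Matrix (Fin 3) (Fin 3) ℝ) (x : Fin 3 → ℝ) : ℝ :=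
  2 * (x ⬝ᵥ (A⁻¹ * Jmat) *ᵥ x) / (x ⬝ᵥ A⁻¹ *ᵥ x)

/-- The plane-wave amplitude `a(t) := a₀ exp(∫₀ᵗ m(e^{−rSᵀ}k₀) dr)`. -/
noncomputable def ampl (A : Matrix (Fin 3) (Fin 3) ℝ) (a₀ : ℝ) (k₀ : Fin 3 → ℝ) (t : ℝ) : ℝ :=
  a₀ * Real.exp (∫ r in (0:ℝ)..t, symb A (NormedSpace.exp ((-r) • (Smat A)ᵀ) *ᵥ k₀))

/-- The plane-wave frequency `k(t) := e^{−tSᵀ}k₀`. -/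
noncomputable def freq (A : Matrix (Fin 3) (Fin 3) ℝ) (k₀ : Fin 3 → ℝ) (t : ℝ) : Fin 3 → ℝ :=
  NormedSpace.exp ((-t) • (Smat A)ᵀ) *ᵥ k₀

/-- A real matrix viewed as a complex matrix. -/
noncomputable def cmat (M : Matrix (Fin 3) (Fin 3) ℝ) : Matrix (Fin 3) (Fin 3) ℂ :=
  M.map (fun r => (r : ℂ))

/-- The plane wave `φ(x,t) := a(t) k(t) e^{2πi k(t)·x}` with values in `ℂ³`. -/
noncomputable def planeWave (A : Matrix (Fin 3) (Fin 3) ℝ) (a₀ : ℝ) (k₀ : Fin 3 → ℝ)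
    (x : Fin 3 → ℝ) (t : ℝ) : Fin 3 → ℂ :=
  fun i => ((ampl A a₀ k₀ t * freq A k₀ t i : ℝ) : ℂ) *
    Complex.exp (2 * π * Complex.I * (freq A k₀ t ⬝ᵥ x))

attribute [local instance] Matrix.linftyOpNormedAddCommGroup Matrix.linftyOpNormedRing
  Matrix.linftyOpNormedAlgebra

/-- `N ↦ N *ᵥ k` as a continuous linear map. -/
noncomputable def mvCLM (k : Fin 3 → ℝ) : Matrix (Fin 3) (Fin 3) ℝ →L[ℝ] (Fin 3 → ℝ) :=
  LinearMap.toContinuousLinearMap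
    { toFun := fun N => N *ᵥ k
      map_add' := fun M N => Matrix.add_mulVec M N k
      map_smul' := fun c N => Matrix.smul_mulVec c N k }

lemma freq_continuous (A : Matrix (Fin 3) (Fin 3) ℝ) (k₀ : Fin 3 → ℝ) :
    Continuous (freq A k₀) := by
  have : freq A k₀ = fun t => mvCLM k₀ (NormedSpace.exp ((-t) • (Smat A)ᵀ)) := rfl
  rw [this]
  exact (mvCLM k₀).continuous.comp
    (NormedSpace.exp_continuous.comp (continuous_id.neg.smul continuous_const))

lemma freq_ne_zero (A : Matrix (Fin 3) (Fin 3) ℝ) (k₀ : Fin 3 → ℝ) (hk₀ : k₀ ≠ 0) (t : ℝ) :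
    freq A k₀ t ≠ 0 := by
  intro h
  apply hk₀
  have hc : Commute (t • (Smat A)ᵀ) ((-t) • (Smat A)ᵀ) :=
    ((Commute.refl (Smat A)ᵀ).smul_left t).smul_right (-t)
  have h1 : NormedSpace.exp (t • (Smat A)ᵀ) * NormedSpace.exp ((-t) • (Smat A)ᵀ) = 1 := by
    refine (NormedSpace.exp_add_of_commute hc).symm.trans ?_
    simp [← add_smul]
  calc k₀ = (NormedSpace.exp (t • (Smat A)ᵀ) * NormedSpace.exp ((-t) • (Smat A)ᵀ)) *ᵥ k₀ := by
        rw [h1, Matrix.one_mulVec]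
    _ = NormedSpace.exp (t • (Smat A)ᵀ) *ᵥ freq A k₀ t := by
        rw [← Matrix.mulVec_mulVec]; rfl
    _ = 0 := by rw [h]; simp

lemma freq_hasDerivAt (A : Matrix (Fin 3) (Fin 3) ℝ) (k₀ : Fin 3 → ℝ) (t : ℝ) :
    HasDerivAt (freq A k₀) (-((Smat A)ᵀ *ᵥ freq A k₀ t)) t := by
  set M := (Smat A)ᵀ with hM
  have h1 : HasDerivAt (fun u : ℝ => NormedSpace.exp (u • M))
      (NormedSpace.exp ((-t) • M) * M) (-t) := hasDerivAt_exp_smul_const M (-t)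
  have h2 : HasDerivAt (fun s : ℝ => -s) (-1) t := (hasDerivAt_id t).neg
  have h3 : HasDerivAt (fun s : ℝ => NormedSpace.exp ((-s) • M))
      ((-1 : ℝ) • (NormedSpace.exp ((-t) • M) * M)) t := h1.scomp t h2
  have h4 : HasDerivAt (freq A k₀)
      (mvCLM k₀ ((-1 : ℝ) • (NormedSpace.exp ((-t) • M) * M))) t :=
    (mvCLM k₀).hasFDerivAt.comp_hasDerivAt t h3
  convert h4 using 1
  have hcomm : NormedSpace.exp ((-t) • M) * M = M * NormedSpace.exp ((-t) • M) :=
    (((Commute.refl M).smul_left (-t)).exp_left).eq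
  show -(M *ᵥ freq A k₀ t) = mvCLM k₀ ((-1 : ℝ) • (NormedSpace.exp ((-t) • M) * M))
  have : mvCLM k₀ ((-1 : ℝ) • (NormedSpace.exp ((-t) • M) * M))
      = ((-1 : ℝ) • (NormedSpace.exp ((-t) • M) * M)) *ᵥ k₀ := rfl
  rw [this, hcomm, Matrix.smul_mulVec, ← Matrix.mulVec_mulVec]
  show -(M *ᵥ freq A k₀ t) = (-1 : ℝ) • (M *ᵥ freq A k₀ t)
  simp

lemma quad_cont (B : Matrix (Fin 3) (Fin 3) ℝ) {g : ℝ → Fin 3 → ℝ} (hg : Continuous g) :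
    Continuous fun r => g r ⬝ᵥ B *ᵥ g r := by
  simp only [Matrix.mulVec, dotProduct]
  exact continuous_finset_sum _ fun i _ =>
    ((continuous_apply i).comp hg).mul
      (continuous_finset_sum _ fun j _ => continuous_const.mul ((continuous_apply j).comp hg))

lemma denom_pos (A : Matrix (Fin 3) (Fin 3) ℝ) (hApd : A.PosDef) {x : Fin 3 → ℝ} (hx : x ≠ 0) :
    0 < x ⬝ᵥ A⁻¹ *ᵥ x := by
  have := hApd.inv.dotProduct_mulVec_pos hx
  simpa using this

/-- `v ↦ k ⬝ᵥ v` as a continuous linear map. -/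
noncomputable def dpLCLM (k : Fin 3 → ℝ) : (Fin 3 → ℝ) →L[ℝ] ℝ :=
  LinearMap.toContinuousLinearMap
    { toFun := fun v => k ⬝ᵥ v
      map_add' := fun a b => dotProduct_add k a b
      map_smul' := fun c a => dotProduct_smul c k a }

/-- `v ↦ v ⬝ᵥ x` as a continuous linear map. -/
noncomputable def dpRCLM (x : Fin 3 → ℝ) : (Fin 3 → ℝ) →L[ℝ] ℝ :=
  LinearMap.toContinuousLinearMap
    { toFun := fun v => v ⬝ᵥ x
      map_add' := fun a b => add_dotProduct a b x
      map_smul' := fun c a => smul_dotProduct c a x }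

@[simp] lemma dpLCLM_apply (k v : Fin 3 → ℝ) : dpLCLM k v = k ⬝ᵥ v := rfl
@[simp] lemma dpRCLM_apply (x v : Fin 3 → ℝ) : dpRCLM x v = v ⬝ᵥ x := rfl

lemma ampl_hasDerivAt (A : Matrix (Fin 3) (Fin 3) ℝ) (hApd : A.PosDef) (a₀ : ℝ)
    (k₀ : Fin 3 → ℝ) (hk₀ : k₀ ≠ 0) (t : ℝ) :
    HasDerivAt (ampl A a₀ k₀) (symb A (freq A k₀ t) * ampl A a₀ k₀ t) t := by
  have hf : Continuous fun r => symb A (freq A k₀ r) := by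
    unfold symb
    exact (continuous_const.mul (quad_cont _ (freq_continuous A k₀))).div
      (quad_cont _ (freq_continuous A k₀))
      fun r => ne_of_gt (denom_pos A hApd (freq_ne_zero A k₀ hk₀ r))
  have hF : HasDerivAt (fun s => ∫ r in (0:ℝ)..s, symb A (freq A k₀ r))
      (symb A (freq A k₀ t)) t := (hf.integral_hasStrictDerivAt 0 t).hasDerivAt
  have h2 : HasDerivAt (ampl A a₀ k₀)
      (a₀ * (Real.exp (∫ r in (0:ℝ)..t, symb A (freq A k₀ r)) * symb A (freq A k₀ t))) t :=
    (hF.exp).const_mul a₀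
  convert h2 using 1
  unfold ampl freq
  ring

lemma cmat_mulVec_pw (A : Matrix (Fin 3) (Fin 3) ℝ) (a₀ : ℝ) (k₀ : Fin 3 → ℝ)
    (x : Fin 3 → ℝ) (t : ℝ) (B : Matrix (Fin 3) (Fin 3) ℝ) (i : Fin 3) :
    (cmat B *ᵥ planeWave A a₀ k₀ x t) i
      = ((ampl A a₀ k₀ t * (B *ᵥ freq A k₀ t) i : ℝ) : ℂ)
        * Complex.exp (2 * π * Complex.I * (freq A k₀ t ⬝ᵥ x)) := by
  simp only [cmat, planeWave, Matrix.mulVec, dotProduct, Matrix.map_apply, Fin.sum_univ_three]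
  push_cast
  ring

/-- the plane wave `φ(x,t) = a(t)k(t)e^{2πi k(t)·x}` satisfies pointwise the
linearised semi-geostrophic equation
`∂ₜφ + (Sx·∇)φ + Sᵀφ = m(k(t))φ` (the right-hand side being the action of the Fourier
multiplier with symbol `m` on a plane wave of frequency `k(t)`). -/
theorem planewave_solves_LSG (A : Matrix (Fin 3) (Fin 3) ℝ) (hApd : A.PosDef)
    (a₀ : ℝ) (ha₀ : a₀ ≠ 0) (k₀ : Fin 3 → ℝ) (hk₀ : k₀ ≠ 0) :
    ∀ x : Fin 3 → ℝ, ∀ t : ℝ,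
      DifferentiableAt ℝ (fun s => planeWave A a₀ k₀ x s) t ∧
      DifferentiableAt ℝ (fun y => planeWave A a₀ k₀ y t) x ∧
      deriv (fun s => planeWave A a₀ k₀ x s) t
          + fderiv ℝ (fun y => planeWave A a₀ k₀ y t) x (Smat A *ᵥ x)
          + cmat (Smat A)ᵀ *ᵥ planeWave A a₀ k₀ x t =
        ((symb A (freq A k₀ t) : ℝ) : ℂ) • planeWave A a₀ k₀ x t := by
  intro x t
  have hk := freq_hasDerivAt A k₀ t
  have ha := ampl_hasDerivAt A hApd a₀ k₀ hk₀ t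
  -- time derivative of the phase
  have hdot : HasDerivAt (fun s => freq A k₀ s ⬝ᵥ x) ((-((Smat A)ᵀ *ᵥ freq A k₀ t)) ⬝ᵥ x) t :=
    (dpRCLM x).hasFDerivAt.comp_hasDerivAt t hk
  have hphase : HasDerivAt
      (fun s => Complex.exp (2 * π * Complex.I * ((freq A k₀ s ⬝ᵥ x : ℝ) : ℂ)))
      (Complex.exp (2 * π * Complex.I * ((freq A k₀ t ⬝ᵥ x : ℝ) : ℂ))
        * (2 * π * Complex.I * (((-((Smat A)ᵀ *ᵥ freq A k₀ t)) ⬝ᵥ x : ℝ) : ℂ))) t :=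
    (hdot.ofReal_comp.const_mul (2 * π * Complex.I)).cexp
  -- time derivative of the plane wave
  have hT : HasDerivAt (fun s => planeWave A a₀ k₀ x s)
      (fun i =>
        ((symb A (freq A k₀ t) * ampl A a₀ k₀ t * freq A k₀ t i
            + ampl A a₀ k₀ t * (-((Smat A)ᵀ *ᵥ freq A k₀ t)) i : ℝ) : ℂ)
          * Complex.exp (2 * π * Complex.I * ((freq A k₀ t ⬝ᵥ x : ℝ) : ℂ))
        + ((ampl A a₀ k₀ t * freq A k₀ t i : ℝ) : ℂ)
          * (Complex.exp (2 * π * Complex.I * ((freq A k₀ t ⬝ᵥ x : ℝ) : ℂ))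
            * (2 * π * Complex.I * (((-((Smat A)ᵀ *ᵥ freq A k₀ t)) ⬝ᵥ x : ℝ) : ℂ)))) t := by
    apply hasDerivAt_pi.2
    intro i
    have hki : HasDerivAt (fun s => freq A k₀ s i) ((-((Smat A)ᵀ *ᵥ freq A k₀ t)) i) t :=
      (hasDerivAt_pi.1 hk) i
    exact ((ha.mul hki).ofReal_comp).mul hphase
  -- spatial derivative
  have hg : HasFDerivAt (fun y : Fin 3 → ℝ => 2 * π * Complex.I * ((freq A k₀ t ⬝ᵥ y : ℝ) : ℂ))
      ((2 * π * Complex.I) • (Complex.ofRealCLM.comp (dpLCLM (freq A k₀ t)))) x :=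
    ((Complex.ofRealCLM.comp (dpLCLM (freq A k₀ t))).hasFDerivAt).const_mul (2 * π * Complex.I)
  have hG : HasFDerivAt
      (fun y : Fin 3 → ℝ => Complex.exp (2 * π * Complex.I * ((freq A k₀ t ⬝ᵥ y : ℝ) : ℂ)))
      (Complex.exp (2 * π * Complex.I * ((freq A k₀ t ⬝ᵥ x : ℝ) : ℂ))
        • ((2 * π * Complex.I) • (Complex.ofRealCLM.comp (dpLCLM (freq A k₀ t))))) x :=
    (Complex.hasDerivAt_exp _).comp_hasFDerivAt x hg
  have hX : HasFDerivAt (fun y => planeWave A a₀ k₀ y t)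
      (ContinuousLinearMap.pi fun i =>
        ((ampl A a₀ k₀ t * freq A k₀ t i : ℝ) : ℂ)
          • (Complex.exp (2 * π * Complex.I * ((freq A k₀ t ⬝ᵥ x : ℝ) : ℂ))
            • ((2 * π * Complex.I) • (Complex.ofRealCLM.comp (dpLCLM (freq A k₀ t)))))) x := by
    apply hasFDerivAt_pi.2
    intro i
    exact hG.const_mul _
  refine ⟨hT.differentiableAt, hX.differentiableAt, ?_⟩
  rw [hT.deriv, hX.fderiv]
  funext i
  have hsw : freq A k₀ t ⬝ᵥ (Smat A *ᵥ x) = ((Smat A)ᵀ *ᵥ freq A k₀ t) ⬝ᵥ x := by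
    rw [dotProduct_mulVec, ← Matrix.mulVec_transpose]
  simp only [Pi.add_apply, ContinuousLinearMap.pi_apply, ContinuousLinearMap.smul_apply,
    ContinuousLinearMap.coe_comp', Function.comp_apply, Complex.ofRealCLM_apply,
    dpLCLM_apply, Pi.smul_apply, smul_eq_mul, cmat_mulVec_pw, planeWave, hsw,
    neg_dotProduct, Pi.neg_apply]
  push_cast
  ring
end

section
/- Let A be a symmetric positive-definite 3×3 real matrix with μ_A < 0 (elliptic flow), S := A⁻¹J(A−I), λ := √(−μ_A/det A) > 0, τ := 2π/λ, and m the associated symbol. Then for every k₀ ∈ ℝ³ \ {0} the symbol evaluated along the frequency trajectory has zero mean over one period: ∫₀^τ m(e^{−rSᵀ}k₀) dr = 0. -/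
open Matrix MeasureTheory Real

open scoped Nat

lemma exp_two_pi_eq_one (M : Matrix (Fin 3) (Fin 3) ℝ) (h3 : M ^ 3 = -M) :
    NormedSpace.exp ((2 * Real.pi) • M) = 1 := by
  letI : NormedRing (Matrix (Fin 3) (Fin 3) ℝ) := Matrix.linftyOpNormedRing
  letI : NormedAlgebra ℝ (Matrix (Fin 3) (Fin 3) ℝ) := Matrix.linftyOpNormedAlgebra
  set t : ℝ := 2 * Real.pi with ht
  have hodd : ∀ k : ℕ, M ^ (2 * k + 1) = ((-1 : ℝ) ^ k) • M := by
    intro k; induction k with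
    | zero => simp
    | succ n ih =>
      rw [show 2 * (n + 1) + 1 = (2 * n + 1) + 2 by ring, pow_add, ih, smul_mul_assoc,
        show M * M ^ 2 = M ^ 3 from (pow_succ' M 2).symm, h3]
      simp [pow_succ]
  have heven : ∀ k : ℕ, M ^ (2 * k + 2) = ((-1 : ℝ) ^ k) • M ^ 2 := by
    intro k; induction k with
    | zero => simp
    | succ n ih =>
      rw [show 2 * (n + 1) + 2 = (2 * n + 2) + 2 by ring, pow_add, ih, smul_mul_assoc,
        show M ^ 2 * M ^ 2 = M ^ 3 * M by rw [← pow_add, ← pow_succ], h3]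
      simp [pow_succ]
  have hs : HasSum (fun n : ℕ => ((n ! : ℝ))⁻¹ • (t • M) ^ n)
      ((1 + (1 - Real.cos t) • M ^ 2) + Real.sin t • M) := by
    refine HasSum.even_add_odd ?_ ?_
    · have h1 : HasSum (fun n : ℕ =>
          (fun m : ℕ => (-1 : ℝ) ^ m * t ^ (2 * m) / ((2 * m)! : ℝ)) (n + 1))
          (Real.cos t - 1) := by
        refine (hasSum_nat_add_iff
          (f := fun m : ℕ => (-1 : ℝ) ^ m * t ^ (2 * m) / ((2 * m)! : ℝ)) 1).mpr ?_
        have hc := Real.hasSum_cos t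
        convert hc using 1
        · rfl
        simp
      have h2 : HasSum (fun n : ℕ =>
          (fun k : ℕ => (((2 * k)! : ℝ))⁻¹ • (t • M) ^ (2 * k)) (n + 1))
          ((1 - Real.cos t) • M ^ 2) := by
        have h2' := (h1.neg).smul_const (M ^ 2)
        rw [neg_sub] at h2'
        convert h2' using 2 with k
        simp only []
        rw [smul_pow, show 2 * (k + 1) = 2 * k + 2 by ring, heven k, smul_smul, smul_smul]
        congr 1
        field_simp
        ring
      have h4 := HasSum.zero_add
        (f := fun k : ℕ => (((2 * k)! : ℝ))⁻¹ • (t • M) ^ (2 * k)) h2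
      simpa using h4
    · have h1 := (Real.hasSum_sin t).smul_const M
      convert h1 using 2 with k
      rw [smul_pow, hodd k, smul_smul, smul_smul]
      congr 1
      field_simp
  have h5 := hs.tsum_eq
  simp only [NormedSpace.exp_eq_tsum ℝ]
  rw [h5, ht, Real.sin_two_pi, Real.cos_two_pi]
  simp

set_option maxHeartbeats 2000000 in
lemma Tcube (a b c d e f : ℝ) (A : Matrix (Fin 3) (Fin 3) ℝ)
    (hA : A = !![a, b, c; b, d, e; c, e, f]) :
    A.adjugate * Jmat * (A - 1) * (A.adjugate * Jmat * (A - 1)) * (A.adjugate * Jmat * (A - 1))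
      = ((a * f - c ^ 2 + d * f - e ^ 2 - f - A.det) * A.det) •
        (A.adjugate * Jmat * (A - 1)) := by
  have hsub : A - 1 = !![a-1, b, c; b, d-1, e; c, e, f-1] := by
    ext i j
    rw [hA]
    fin_cases i <;> fin_cases j <;> simp [Matrix.one_apply]
  have hdet : A.det = a*(d*f) - a*(e*e) - b*(b*f) + b*(c*e) + c*(b*e) - c*(c*d) := by
    rw [hA, Matrix.det_fin_three]; simp; ring
  have hadj : A.adjugate = !![d*f - e*e, -(b*f) + c*e, b*e - c*d;
      -(b*f) + e*c, a*f - c*c, -(a*e) + c*b; b*e - d*c, -(a*e) + b*c, a*d - b*b] := by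
    rw [hA, Matrix.adjugate_fin_three]; ext i j
    fin_cases i <;> fin_cases j <;> simp [Matrix.vecHead, Matrix.vecTail] <;> ring
  rw [hsub, hdet, hadj, show Jmat = !![0,-1,0;1,0,0;0,0,0] from rfl]
  rw [Matrix.mul_fin_three, Matrix.mul_fin_three, Matrix.mul_fin_three, Matrix.mul_fin_three]
  ext i j
  fin_cases i <;> fin_cases j <;> simp <;> ring

lemma Scube (a b c d e f μ : ℝ) (A : Matrix (Fin 3) (Fin 3) ℝ)
    (hA : A = !![a, b, c; b, d, e; c, e, f]) (hApd : A.PosDef)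
    (hμ : μ = a * f - c ^ 2 + d * f - e ^ 2 - f - A.det) :
    Smat A ^ 3 = (μ / A.det) • Smat A := by
  have hδ : A.det ≠ 0 := ne_of_gt hApd.det_pos
  have hS : Smat A = (A.det)⁻¹ • (A.adjugate * Jmat * (A - 1)) := by
    rw [Smat, Matrix.inv_def, Ring.inverse_eq_inv']
    simp [Matrix.smul_mul]
  rw [hS, smul_pow, pow_three (A.adjugate * Jmat * (A - 1)), ← mul_assoc,
    Tcube a b c d e f A hA, ← hμ, smul_smul, smul_smul]
  congr 1
  field_simp

lemma JT : Jmatᵀ = -Jmat := by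
  ext i j; fin_cases i <;> fin_cases j <;> simp [Jmat, Matrix.vecHead, Matrix.vecTail]

lemma dot_transpose (M : Matrix (Fin 3) (Fin 3) ℝ) (x : Fin 3 → ℝ) :
    x ⬝ᵥ Mᵀ *ᵥ x = x ⬝ᵥ M *ᵥ x := by
  rw [Matrix.dotProduct_mulVec, Matrix.vecMul_transpose, dotProduct_comm]

lemma Sid (A : Matrix (Fin 3) (Fin 3) ℝ) (hAT : Aᵀ = A) (hdet : IsUnit A.det) :
    Smat A * A⁻¹ + A⁻¹ * (Smat A)ᵀ = A⁻¹ * Jmat - Jmat * A⁻¹ := by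
  have hAB : A * A⁻¹ = 1 := Matrix.mul_nonsing_inv A hdet
  have hBA : A⁻¹ * A = 1 := Matrix.nonsing_inv_mul A hdet
  have hBT : (A⁻¹)ᵀ = A⁻¹ := by rw [Matrix.transpose_nonsing_inv, hAT]
  have hST : (Smat A)ᵀ = (A - 1) * -Jmat * A⁻¹ := by
    rw [Smat, Matrix.transpose_mul, Matrix.transpose_mul, JT, hBT, Matrix.transpose_sub,
      Matrix.transpose_one, hAT, mul_assoc]
  have h1 : Smat A * A⁻¹ = A⁻¹ * Jmat - A⁻¹ * Jmat * A⁻¹ := by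
    rw [Smat, mul_assoc (A⁻¹ * Jmat), Matrix.sub_mul, hAB, Matrix.one_mul, Matrix.mul_sub,
      Matrix.mul_one]
  have h2 : A⁻¹ * (Smat A)ᵀ = A⁻¹ * Jmat * A⁻¹ - Jmat * A⁻¹ := by
    rw [hST, ← mul_assoc, ← mul_assoc, Matrix.mul_sub, Matrix.mul_one, hBA, Matrix.sub_mul,
      Matrix.sub_mul, Matrix.one_mul, mul_neg]
    rw [neg_mul, neg_mul, sub_neg_eq_add]
    abel
  rw [h1, h2]
  abel

set_option maxHeartbeats 2000000 in
/-- in the elliptic case `μ_A < 0`, with `λ := √(−μ_A/det A)` and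
`τ := 2π/λ`, the symbol has zero mean along any frequency trajectory over one period:
`∫₀^τ m(e^{−rSᵀ}k₀) dr = 0` for every `k₀ ≠ 0`. -/
theorem elliptic_zero_mean (a b c d e f : ℝ) (A : Matrix (Fin 3) (Fin 3) ℝ)
    (hA : A = !![a, b, c; b, d, e; c, e, f]) (hApd : A.PosDef)
    (μ : ℝ) (hμ : μ = a * f - c ^ 2 + d * f - e ^ 2 - f - A.det) (hμneg : μ < 0)
    (lam τ : ℝ) (hlam : lam = Real.sqrt (-μ / A.det)) (hτ : τ = 2 * π / lam) :
    ∀ k₀ : Fin 3 → ℝ, k₀ ≠ 0 →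
      ∫ r in (0:ℝ)..τ, symb A (NormedSpace.exp ((-r) • (Smat A)ᵀ) *ᵥ k₀) = 0 := by
  intro k₀ hk₀
  letI : NormedRing (Matrix (Fin 3) (Fin 3) ℝ) := Matrix.linftyOpNormedRing
  letI : NormedAlgebra ℝ (Matrix (Fin 3) (Fin 3) ℝ) := Matrix.linftyOpNormedAlgebra
  have hdetpos := hApd.det_pos
  have hdetne : A.det ≠ 0 := ne_of_gt hdetpos
  have hdetu : IsUnit A.det := isUnit_iff_ne_zero.2 hdetne
  have hAT : Aᵀ = A := by
    rw [hA]; ext i j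
    fin_cases i <;> fin_cases j <;> simp [Matrix.vecHead, Matrix.vecTail]
  have hlampos : 0 < lam := by
    rw [hlam]
    exact Real.sqrt_pos.2 (div_pos (neg_pos.2 hμneg) hdetpos)
  have hlamne : lam ≠ 0 := ne_of_gt hlampos
  have hlam2 : lam ^ 2 = -μ / A.det := by
    rw [hlam, Real.sq_sqrt (div_nonneg (neg_pos.2 hμneg).le hdetpos.le)]
  set X := (Smat A)ᵀ with hXdef
  have hXcube : X ^ 3 = (-(lam ^ 2)) • X := by
    rw [hXdef, ← Matrix.transpose_pow, Scube a b c d e f μ A hA hApd hμ,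
      Matrix.transpose_smul]
    congr 1
    rw [hlam2]
    field_simp
  have hexp1 : NormedSpace.exp ((-τ) • X) = 1 := by
    have hY : ((-lam⁻¹) • X) ^ 3 = -((-lam⁻¹) • X) := by
      rw [smul_pow, hXcube, smul_smul, ← neg_smul]
      congr 1
      field_simp
    have h := exp_two_pi_eq_one _ hY
    rw [smul_smul] at h
    have he : 2 * Real.pi * -lam⁻¹ = -τ := by
      rw [hτ]
      field_simp
    rwa [he] at h
  -- derivative of the matrix flow
  have hder : ∀ r : ℝ, HasDerivAt (fun u : ℝ => NormedSpace.exp ((-u) • X))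
      (-(X * NormedSpace.exp ((-r) • X))) r := by
    intro r
    have h1 := hasDerivAt_exp_smul_const' (𝕂 := ℝ) X (-r)
    have h2 := h1.scomp r ((hasDerivAt_id r).neg)
    simp [Function.comp_def] at h2 ⊢
    exact h2
  set E : ℝ → Matrix (Fin 3) (Fin 3) ℝ := fun r => NormedSpace.exp ((-r) • X) with hEdef
  set kk : ℝ → Fin 3 → ℝ := fun r => E r *ᵥ k₀ with hkkdef
  have hkd : ∀ (i : Fin 3) (r : ℝ), HasDerivAt (fun u => kk u i) ((-(X *ᵥ kk r)) i) r := by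
    intro i r
    let L0 : Matrix (Fin 3) (Fin 3) ℝ →ₗ[ℝ] ℝ :=
      { toFun := fun M => (M *ᵥ k₀) i
        map_add' := by intro M N; simp [Matrix.add_mulVec]
        map_smul' := by intro cc M; simp [Matrix.smul_mulVec] }
    let L : Matrix (Fin 3) (Fin 3) ℝ →L[ℝ] ℝ :=
      ⟨L0, L0.continuous_of_finiteDimensional⟩
    have h := (L.hasFDerivAt (x := E r)).comp_hasDerivAt r (hder r)
    have h' : HasDerivAt (fun u => kk u i) (((-(X * E r)) *ᵥ k₀) i) r := h
    simpa [L, L0, hkkdef, hEdef, Function.comp_def, Matrix.mulVec_mulVec, Matrix.neg_mulVec, neg_smul] using h'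
  have hkc : ∀ i : Fin 3, Continuous fun u => kk u i := fun i =>
    continuous_iff_continuousAt.2 fun r => (hkd i r).continuousAt
  -- derivative of q
  have hqd : ∀ r : ℝ, HasDerivAt (fun u => kk u ⬝ᵥ A⁻¹ *ᵥ kk u)
      ((-(X *ᵥ kk r)) ⬝ᵥ A⁻¹ *ᵥ kk r + kk r ⬝ᵥ A⁻¹ *ᵥ (-(X *ᵥ kk r))) r := by
    intro r
    have h : HasDerivAt (fun u => ∑ i : Fin 3, kk u i * ∑ j : Fin 3, A⁻¹ i j * kk u j)
        (∑ i : Fin 3, ((-(X *ᵥ kk r)) i * ∑ j : Fin 3, A⁻¹ i j * kk r j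
          + kk r i * ∑ j : Fin 3, A⁻¹ i j * (-(X *ᵥ kk r)) j)) r := by
      refine HasDerivAt.fun_sum fun i _ => ?_
      exact (hkd i r).mul (HasDerivAt.fun_sum fun j _ => (hkd j r).const_mul (A⁻¹ i j))
    convert h using 1 <;>
      simp [dotProduct, Matrix.mulVec, Finset.sum_add_distrib]
  -- the key algebraic identity
  have key : ∀ x : Fin 3 → ℝ, (-(X *ᵥ x)) ⬝ᵥ A⁻¹ *ᵥ x + x ⬝ᵥ A⁻¹ *ᵥ (-(X *ᵥ x))
      = -(2 * (x ⬝ᵥ (A⁻¹ * Jmat) *ᵥ x)) := by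
    intro x
    have hBT : (A⁻¹)ᵀ = A⁻¹ := by rw [Matrix.transpose_nonsing_inv, hAT]
    have hs1 : (X *ᵥ x) ⬝ᵥ (A⁻¹ *ᵥ x) = x ⬝ᵥ (Smat A * A⁻¹) *ᵥ x := by
      rw [hXdef, Matrix.mulVec_transpose, ← Matrix.dotProduct_mulVec, Matrix.mulVec_mulVec]
    have hs2 : x ⬝ᵥ A⁻¹ *ᵥ (X *ᵥ x) = x ⬝ᵥ (A⁻¹ * X) *ᵥ x := by
      rw [Matrix.mulVec_mulVec]
    have hskew : x ⬝ᵥ (Jmat * A⁻¹) *ᵥ x = -(x ⬝ᵥ (A⁻¹ * Jmat) *ᵥ x) := by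
      have hdt := dot_transpose (Jmat * A⁻¹) x
      rw [Matrix.transpose_mul, JT, hBT, mul_neg, Matrix.neg_mulVec, dotProduct_neg] at hdt
      linarith
    have hsum : (X *ᵥ x) ⬝ᵥ (A⁻¹ *ᵥ x) + x ⬝ᵥ A⁻¹ *ᵥ (X *ᵥ x)
        = x ⬝ᵥ (A⁻¹ * Jmat - Jmat * A⁻¹) *ᵥ x := by
      rw [hs1, hs2, ← Sid A hAT hdetu, Matrix.add_mulVec, dotProduct_add, hXdef]
    rw [Matrix.sub_mulVec, dotProduct_sub, hskew] at hsum
    have hneg1 : (-(X *ᵥ x)) ⬝ᵥ A⁻¹ *ᵥ x = -((X *ᵥ x) ⬝ᵥ (A⁻¹ *ᵥ x)) := by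
      rw [neg_dotProduct]
    have hneg2 : x ⬝ᵥ A⁻¹ *ᵥ (-(X *ᵥ x)) = -(x ⬝ᵥ A⁻¹ *ᵥ (X *ᵥ x)) := by
      rw [Matrix.mulVec_neg, dotProduct_neg]
    rw [hneg1, hneg2]
    linarith
  -- positivity of q
  have hkne : ∀ r : ℝ, kk r ≠ 0 := by
    intro r h
    have hu := Matrix.isUnit_exp ((-r) • X)
    have hd := (Matrix.isUnit_iff_isUnit_det _).1 hu
    have h2 := congrArg (fun v => (E r)⁻¹ *ᵥ v) h
    simp only [hkkdef, hEdef] at h2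
    rw [Matrix.mulVec_mulVec, Matrix.nonsing_inv_mul _ hd, Matrix.one_mulVec,
      Matrix.mulVec_zero] at h2
    exact hk₀ h2
  have hqpos : ∀ r : ℝ, 0 < kk r ⬝ᵥ A⁻¹ *ᵥ kk r := by
    intro r
    have := hApd.inv.re_dotProduct_pos (hkne r)
    simpa using this
  -- FTC
  have hF : ∀ r : ℝ, HasDerivAt (fun u => -Real.log (kk u ⬝ᵥ A⁻¹ *ᵥ kk u))
      (symb A (kk r)) r := by
    intro r
    have h1 := ((hqd r).log (ne_of_gt (hqpos r))).neg
    convert h1 using 1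
    rotate_left 3
    simp only [symb]
    rw [key (kk r)]
    field_simp
    all_goals rfl
  have hqc : Continuous fun u => kk u ⬝ᵥ A⁻¹ *ᵥ kk u := by
    simp only [dotProduct, Matrix.mulVec]
    exact continuous_finset_sum _ fun i _ => (hkc i).mul
      (continuous_finset_sum _ fun j _ => continuous_const.mul (hkc j))
  have hpc : Continuous fun u => kk u ⬝ᵥ (A⁻¹ * Jmat) *ᵥ kk u := by
    simp only [dotProduct, Matrix.mulVec]
    exact continuous_finset_sum _ fun i _ => (hkc i).mul
      (continuous_finset_sum _ fun j _ => continuous_const.mul (hkc j))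
  have hic : Continuous fun u => symb A (kk u) := by
    simp only [symb]
    exact ((continuous_const.mul hpc).div hqc) fun r => ne_of_gt (hqpos r)
  have hInt : IntervalIntegrable (fun r => symb A (kk r)) volume 0 τ :=
    hic.intervalIntegrable 0 τ
  have hFTC := intervalIntegral.integral_eq_sub_of_hasDerivAt
    (f := fun u => -Real.log (kk u ⬝ᵥ A⁻¹ *ᵥ kk u)) (f' := fun r => symb A (kk r))
    (fun r _ => hF r) hInt
  have hk0 : kk 0 = k₀ := by
    simp only [hkkdef, hEdef]
    norm_num [NormedSpace.exp_zero, Matrix.one_mulVec]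
  have hkτ : kk τ = k₀ := by
    simp only [hkkdef, hEdef]
    rw [hexp1, Matrix.one_mulVec]
  rw [hFTC]
  simp [hk0, hkτ]
end
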